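/- Let F be a field, t ∈ F invertible, and R a unital associative F-algebra containing r mutually commuting t-oscillator triples (a_i, a†_i, k_i), 1 ≤ i ≤ r (elements of distinct triples commute). Let L(x) be the (r+1)×(r+1) matrix over R with rows and columns indexed by 0,…,r defined by: L_{00} = 1; L_{0j} = a_j for 1 ≤ j ≤ r; L_{i0} = x·a†_i·k_{i+1}···k_r for 1 ≤ i ≤ r; L_{ii} = x·k_{i+1}···k_r for 1 ≤ i ≤ r; L_{ij} = x·a_j·a†_i·k_{i+1}···k_r for 1 ≤ j < i ≤ r; and L_{ij} = 0 for 1 ≤ i < j ≤ r. Then for all x, y ∈ F with t·x ≠ y the intertwining (Yang–Baxter algebra) relation holds: for all i, j, k, l ∈ {0,…,r}, Σ_{(i',j')} Ř^{(r)}(x,y)_{(i,j),(i',j')}·L_{i'k}(x)·L_{j'l}(y) = Σ_{(k',l')} L_{ik'}(y)·L_{jl'}(x)·Ř^{(r)}(x,y)_{(k',l'),(k,l)}. -/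

import Mathlib

/-!
STATEMENT 0: The `L`-matrix built from `r` mutually commuting `t`-oscillator triples
satisfies the intertwining (Yang–Baxter algebra) relation with the `R`-matrix of
`U_{t^{1/2}}(A_r^{(1)})`.
-/

open scoped BigOperators

/-- A `t`-oscillator triple `(a, a†, k)` in an `F`-algebra `R`. -/
def IsOscTriple {F R : Type*} [Field F] [Ring R] [Algebra F R]
    (t : F) (a ad k : R) : Prop :=
  a * k = t • (k * a) ∧ ad * k = t⁻¹ • (k * ad) ∧
    a * ad = 1 - k ∧ ad * a = 1 - t⁻¹ • k

/-- The entries of the `R`-matrix `Ř^{(N-1)}(x,y)`: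
`Ř = Σ_i E^{ii}⊗E^{ii} + ((x−y)/(t·x−y))·Σ_{i<j}(t·E^{ij}⊗E^{ji} + E^{ji}⊗E^{ij})
   + ((t−1)/(t·x−y))·Σ_{i<j}(x·E^{ii}⊗E^{jj} + y·E^{jj}⊗E^{ii})`,
with `(M⊗N)_{(a,b),(c,d)} = M_{ac}·N_{bd}`. -/
def Rmat {F : Type*} [Field F] (N : ℕ) (t x y : F)
    (p q : Fin N × Fin N) : F :=
  (if p.1 = p.2 ∧ q = p then 1 else 0)
  + (if p.1 < p.2 ∧ q = (p.2, p.1) then t * (x - y) / (t * x - y) else 0)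
  + (if p.2 < p.1 ∧ q = (p.2, p.1) then (x - y) / (t * x - y) else 0)
  + (if p.1 < p.2 ∧ q = p then x * (t - 1) / (t * x - y) else 0)
  + (if p.2 < p.1 ∧ q = p then y * (t - 1) / (t * x - y) else 0)

/-- The ordered product `k_{i+1} · k_{i+2} ⋯ k_r`. -/
def kprod {R : Type*} [Ring R] (k : ℕ → R) (i r : ℕ) : R :=
  ((List.range' (i + 1) (r - i)).map k).prod

/-- The `(r+1)×(r+1)` matrix `L(x)` of Theorem 4.1:
`L_{00} = 1`, `L_{0j} = a_j`, `L_{i0} = x·a†_i·k_{i+1}⋯k_r`,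
`L_{ii} = x·k_{i+1}⋯k_r`, `L_{ij} = x·a_j·a†_i·k_{i+1}⋯k_r` for `j < i`,
and `L_{ij} = 0` for `0 < i < j`. -/
def Lmat {F R : Type*} [Field F] [Ring R] [Algebra F R]
    (r : ℕ) (a ad k : ℕ → R) (x : F) :
    Matrix (Fin (r + 1)) (Fin (r + 1)) R :=
  fun i j =>
    if i.val = 0 then (if j.val = 0 then 1 else a j.val)
    else if j.val = 0 then x • (ad i.val * kprod k i.val r)
    else if i.val = j.val then x • kprod k i.val r
    else if j.val < i.val then x • (a j.val * ad i.val * kprod k i.val r)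
    else 0

section
variable {F R : Type*} [Field F] [Ring R] [Algebra F R]

lemma comm_swap {u v : R} (h : Commute u v) (w : R) : u * (v * w) = v * (u * w) := by
  rw [← mul_assoc, h.eq, mul_assoc]

lemma twist_swap {c : F} {u v : R} (h : u * v = c • (v * u)) (w : R) :
    u * (v * w) = c • (v * (u * w)) := by
  rw [← mul_assoc, h, smul_mul_assoc, mul_assoc]

lemma twist_flip {c : F} (hc : c ≠ 0) {u v : R} (h : u * v = c • (v * u)) :
    v * u = c⁻¹ • (u * v) := by
  rw [h, smul_smul, inv_mul_cancel₀ hc, one_smul]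

lemma twist_prod {r : ℕ} {k : ℕ → R} {g : R} {c : F} {m : ℕ}
    (hg : ∀ j, 1 ≤ j → j ≤ r → j ≠ m → Commute g (k j))
    (hgm : g * k m = c • (k m * g)) :
    ∀ n s, 1 ≤ s → s + n ≤ r + 1 → s ≤ m → m < s + n →
      g * ((List.range' s n).map k).prod = c • (((List.range' s n).map k).prod * g) := by
  intro n
  induction n with
  | zero => intro s _ _ h1 h2; omega
  | succ n ih =>
    intro s hs1 hsn hsm hms
    rw [List.range'_succ, List.map_cons, List.prod_cons]
    rcases eq_or_lt_of_le hsm with he | hlt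
    · subst he
      have hrest : Commute g (((List.range' (s+1) n).map k).prod) := by
        apply Commute.list_prod_right
        intro x hx
        simp only [List.mem_map] at hx
        obtain ⟨j, hj, rfl⟩ := hx
        rw [List.mem_range'] at hj
        exact hg j (by omega) (by omega) (by omega)
      rw [← mul_assoc, hgm, smul_mul_assoc, mul_assoc, hrest.eq, ← mul_assoc]
    · have hcs : Commute g (k s) := hg s hs1 (by omega) (by omega)
      rw [comm_swap hcs, ih (s+1) (by omega) (by omega) (by omega) (by omega), mul_smul_comm,
        mul_assoc]

lemma commute_kprod {r i : ℕ} {k : ℕ → R} {g : R}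
    (hg : ∀ j, i + 1 ≤ j → j ≤ r → Commute g (k j)) :
    Commute g (kprod k i r) := by
  apply Commute.list_prod_right
  intro x hx
  simp only [List.mem_map] at hx
  obtain ⟨j, hj, rfl⟩ := hx
  rw [List.mem_range'] at hj
  exact hg j (by omega) (by omega)

variable {r : ℕ} {t : F} {a ad k : ℕ → R}
variable (hosc : ∀ i, 1 ≤ i → i ≤ r → IsOscTriple t (a i) (ad i) (k i))
variable (hcomm : ∀ i j, 1 ≤ i → i ≤ r → 1 ≤ j → j ≤ r → i ≠ j →
      ∀ u ∈ [a i, ad i, k i], ∀ v ∈ [a j, ad j, k j], Commute u v)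

section base
include hcomm

lemma comm_aa {m n : ℕ} (h1 : 1 ≤ m) (h2 : m ≤ r) (h3 : 1 ≤ n) (h4 : n ≤ r) (h : m ≠ n) :
    Commute (a m) (a n) := hcomm m n h1 h2 h3 h4 h _ (by simp) _ (by simp)
lemma comm_aad {m n : ℕ} (h1 : 1 ≤ m) (h2 : m ≤ r) (h3 : 1 ≤ n) (h4 : n ≤ r) (h : m ≠ n) :
    Commute (a m) (ad n) := hcomm m n h1 h2 h3 h4 h _ (by simp) _ (by simp)
lemma comm_ak {m n : ℕ} (h1 : 1 ≤ m) (h2 : m ≤ r) (h3 : 1 ≤ n) (h4 : n ≤ r) (h : m ≠ n) :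
    Commute (a m) (k n) := hcomm m n h1 h2 h3 h4 h _ (by simp) _ (by simp)
lemma comm_adad {m n : ℕ} (h1 : 1 ≤ m) (h2 : m ≤ r) (h3 : 1 ≤ n) (h4 : n ≤ r) (h : m ≠ n) :
    Commute (ad m) (ad n) := hcomm m n h1 h2 h3 h4 h _ (by simp) _ (by simp)
lemma comm_adk {m n : ℕ} (h1 : 1 ≤ m) (h2 : m ≤ r) (h3 : 1 ≤ n) (h4 : n ≤ r) (h : m ≠ n) :
    Commute (ad m) (k n) := hcomm m n h1 h2 h3 h4 h _ (by simp) _ (by simp)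
lemma comm_kk {m n : ℕ} (h1 : 1 ≤ m) (h2 : m ≤ r) (h3 : 1 ≤ n) (h4 : n ≤ r) (h : m ≠ n) :
    Commute (k m) (k n) := hcomm m n h1 h2 h3 h4 h _ (by simp) _ (by simp)

end base

section osc
include hosc
lemma osc_ak {m : ℕ} (h1 : 1 ≤ m) (h2 : m ≤ r) : a m * k m = t • (k m * a m) :=
  (hosc m h1 h2).1
lemma osc_adk {m : ℕ} (h1 : 1 ≤ m) (h2 : m ≤ r) : ad m * k m = t⁻¹ • (k m * ad m) :=
  (hosc m h1 h2).2.1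
lemma osc_aad {m : ℕ} (h1 : 1 ≤ m) (h2 : m ≤ r) : a m * ad m = 1 - k m :=
  (hosc m h1 h2).2.2.1
lemma osc_ada {m : ℕ} (h1 : 1 ≤ m) (h2 : m ≤ r) : ad m * a m = 1 - t⁻¹ • k m :=
  (hosc m h1 h2).2.2.2
end osc

section base2
include hcomm

/-- `a m` commutes with `kprod k i r` when `m ≤ i`. -/
lemma aK_comm {m i : ℕ} (h1 : 1 ≤ m) (h2 : m ≤ r) (h3 : m ≤ i) :
    Commute (a m) (kprod k i r) :=
  commute_kprod fun j hj1 hj2 => comm_ak hcomm h1 h2 (by omega) hj2 (by omega)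

lemma adK_comm {m i : ℕ} (h1 : 1 ≤ m) (h2 : m ≤ r) (h3 : m ≤ i) :
    Commute (ad m) (kprod k i r) :=
  commute_kprod fun j hj1 hj2 => comm_adk hcomm h1 h2 (by omega) hj2 (by omega)

lemma kK_comm {m i : ℕ} (h1 : 1 ≤ m) (h2 : m ≤ r) :
    Commute (k m) (kprod k i r) := by
  apply commute_kprod
  intro j hj1 hj2
  rcases eq_or_ne m j with rfl | h
  · exact Commute.refl _
  · exact comm_kk hcomm h1 h2 (by omega) hj2 h

lemma KK_comm {i j : ℕ} : Commute (kprod k i r) (kprod k j r) := by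
  apply commute_kprod
  intro m hm1 hm2
  exact (kK_comm hcomm (by omega) hm2).symm

end base2

section twist
include hosc hcomm

lemma aK_twist {m i : ℕ} (h1 : i < m) (h2 : m ≤ r) :
    a m * kprod k i r = t • (kprod k i r * a m) :=
  twist_prod (fun j hj1 hj2 hj3 => comm_ak hcomm (by omega) h2 hj1 hj2 hj3.symm)
    ((hosc m (by omega) h2).1) (r - i) (i + 1) (by omega) (by omega) (by omega) (by omega)

lemma adK_twist {m i : ℕ} (h1 : i < m) (h2 : m ≤ r) :
    ad m * kprod k i r = t⁻¹ • (kprod k i r * ad m) :=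
  twist_prod (fun j hj1 hj2 hj3 => comm_adk hcomm (by omega) h2 hj1 hj2 hj3.symm)
    ((hosc m (by omega) h2).2.1) (r - i) (i + 1) (by omega) (by omega) (by omega) (by omega)

lemma Kad_twist (ht : t ≠ 0) {m i : ℕ} (h1 : i < m) (h2 : m ≤ r) :
    kprod k i r * ad m = t • (ad m * kprod k i r) := by
  rw [adK_twist hosc hcomm h1 h2, smul_smul, mul_inv_cancel₀ ht, one_smul]

lemma Ka_twist (ht : t ≠ 0) {m i : ℕ} (h1 : i < m) (h2 : m ≤ r) :
    kprod k i r * a m = t⁻¹ • (a m * kprod k i r) := by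
  rw [aK_twist hosc hcomm h1 h2, smul_smul, inv_mul_cancel₀ ht, one_smul]

end twist
end

/-- `M`-matrix entries as a function of natural number indices. -/
def Ment {R : Type*} [Ring R] (r : ℕ) (a ad k : ℕ → R) (i p : ℕ) : R :=
  if i = 0 then (if p = 0 then 1 else a p)
  else if p = 0 then ad i * kprod k i r
  else if i = p then kprod k i r
  else if p < i then a p * ad i * kprod k i r
  else 0

/-- The `W`-part of a row-`i` entry. -/
def Wm {R : Type*} [Ring R] (a ad : ℕ → R) (i p : ℕ) : R :=
  if p = 0 then ad i else if p = i then 1 else a p * ad i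

section WSec
variable {F R : Type*} [Field F] [Ring R] [Algebra F R]
variable {r : ℕ} {t : F} {a ad k : ℕ → R}
variable (hosc : ∀ i, 1 ≤ i → i ≤ r → IsOscTriple t (a i) (ad i) (k i))
variable (hcomm : ∀ i j, 1 ≤ i → i ≤ r → 1 ≤ j → j ≤ r → i ≠ j →
      ∀ u ∈ [a i, ad i, k i], ∀ v ∈ [a j, ad j, k j], Commute u v)

lemma Ment_zero_row {i p : ℕ} (h1 : 1 ≤ i) (h2 : i < p) : Ment r a ad k i p = 0 := by
  unfold Ment
  rw [if_neg (by omega), if_neg (by omega), if_neg (by omega), if_neg (by omega)]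

lemma Ment_eq_W {i p : ℕ} (h1 : 1 ≤ i) (h2 : p ≤ i) :
    Ment r a ad k i p = Wm a ad i p * kprod k i r := by
  unfold Ment Wm
  split_ifs <;> first | omega | rfl | rw [one_mul]

lemma Ment_row0_0 : Ment r a ad k 0 0 = 1 := by simp [Ment]
lemma Ment_row0 {p : ℕ} (h : p ≠ 0) : Ment r a ad k 0 p = a p := by simp [Ment, h]

section lemmasW
include hcomm

/-- `Wm i p` commutes with `a m` when `m ≠ i`. -/
lemma Wa_comm {i p m : ℕ} (h1 : 1 ≤ i) (h2 : i ≤ r) (hp : p ≤ i) (hm1 : 1 ≤ m)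
    (hm2 : m ≤ r) (hmi : m ≠ i) : Commute (Wm a ad i p) (a m) := by
  unfold Wm
  split_ifs with h h'
  · exact (comm_aad hcomm hm1 hm2 h1 h2 hmi).symm
  · exact Commute.one_left _
  · refine Commute.mul_left ?_ ((comm_aad hcomm hm1 hm2 h1 h2 hmi).symm)
    rcases eq_or_ne p m with rfl | hne
    · exact Commute.refl _
    · exact comm_aa hcomm (by omega) (by omega) hm1 hm2 hne

lemma Wad_comm {i p m : ℕ} (h1 : 1 ≤ i) (h2 : i ≤ r) (hp : p ≤ i) (hm1 : 1 ≤ m)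
    (hm2 : m ≤ r) (hmp : m ≠ p) : Commute (Wm a ad i p) (ad m) := by
  unfold Wm
  have had : Commute (ad i) (ad m) := by
    rcases eq_or_ne i m with rfl | hne
    · exact Commute.refl _
    · exact (comm_adad hcomm hm1 hm2 h1 h2 hne.symm).symm
  split_ifs with h h'
  · exact had
  · exact Commute.one_left _
  · exact Commute.mul_left (comm_aad hcomm (by omega) (by omega) hm1 hm2 hmp.symm) had

lemma Wk_comm {i p m : ℕ} (h1 : 1 ≤ i) (h2 : i ≤ r) (hp : p ≤ i) (hm1 : 1 ≤ m)
    (hm2 : m ≤ r) (hmi : m ≠ i) (hmp : m ≠ p) : Commute (Wm a ad i p) (k m) := by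
  unfold Wm
  split_ifs with h h'
  · exact (comm_adk hcomm h1 h2 hm1 hm2 hmi.symm)
  · exact Commute.one_left _
  · exact Commute.mul_left (comm_ak hcomm (by omega) (by omega) hm1 hm2 hmp.symm)
      (comm_adk hcomm h1 h2 hm1 hm2 hmi.symm)

/-- `Wm i p` commutes with `kprod k j r` when `i ≤ j` and `p ≤ j`. -/
lemma WK_comm {i p j : ℕ} (h1 : 1 ≤ i) (h2 : i ≤ r) (hp : p ≤ i) (hij : i ≤ j) :
    Commute (Wm a ad i p) (kprod k j r) := by
  unfold Wm
  split_ifs with h h'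
  · exact adK_comm hcomm h1 h2 hij
  · exact Commute.one_left _
  · exact Commute.mul_left (aK_comm hcomm (by omega) (by omega) (by omega))
      (adK_comm hcomm h1 h2 hij)

omit hcomm in
lemma Wm_diag {i : ℕ} (h : i ≠ 0) : Wm a ad i i = 1 := by
  unfold Wm; rw [if_neg h, if_pos rfl]

/-- Two `W`s in the same row commute. -/
lemma WWrow_comm {i p q : ℕ} (h1 : 1 ≤ i) (h2 : i ≤ r) (hp : p ≤ i) (hq : q ≤ i) :
    Commute (Wm a ad i p) (Wm a ad i q) := by
  rcases eq_or_ne p i with heq | hpi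
  · rw [heq, Wm_diag (show i ≠ 0 by omega)]; exact Commute.one_left _
  rcases eq_or_ne q i with heq | hqi
  · rw [heq, Wm_diag (show i ≠ 0 by omega)]; exact Commute.one_right _
  rcases eq_or_ne q 0 with rfl | hq0
  · show Commute _ (Wm a ad i 0)
    unfold Wm; rw [if_pos rfl]
    exact Wad_comm hcomm h1 h2 hp h1 h2 (Ne.symm hpi)
  · conv_rhs => rw [Wm, if_neg hq0, if_neg hqi]
    exact Commute.mul_right (Wa_comm hcomm h1 h2 hp (by omega) (by omega) hqi)
      (Wad_comm hcomm h1 h2 hp h1 h2 (Ne.symm hpi))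

/-- `W`s in different rows commute provided the column of the higher row avoids `i`. -/
lemma WW_comm {i j p q : ℕ} (h1 : 1 ≤ i) (hij : i < j) (hjr : j ≤ r) (hp : p ≤ i)
    (hq : q ≤ j) (hqi : q ≠ i) : Commute (Wm a ad i p) (Wm a ad j q) := by
  rcases eq_or_ne q j with heq | hqj
  · rw [heq, Wm_diag (show j ≠ 0 by omega)]; exact Commute.one_right _
  rcases eq_or_ne q 0 with rfl | hq0
  · show Commute _ (Wm a ad j 0)
    unfold Wm; rw [if_pos rfl]
    exact Wad_comm hcomm h1 (by omega) hp (by omega) hjr (by omega)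
  · conv_rhs => rw [Wm, if_neg hq0, if_neg hqj]
    exact Commute.mul_right (Wa_comm hcomm h1 (by omega) hp (by omega) (by omega) hqi)
      (Wad_comm hcomm h1 (by omega) hp (by omega) hjr (by omega))

end lemmasW

/-- `a q`, or `1` when `q = 0`. -/
def Am' : (ℕ → R) → ℕ → R := fun a q => if q = 0 then 1 else a q

lemma Ment_row0' {p : ℕ} : Ment r a ad k 0 p = Am' a p := by
  unfold Ment Am'; split_ifs <;> first | rfl | omega

lemma Wm_split {i q : ℕ} (h1 : i ≠ 0) (hq : q ≠ i) :
    Wm a ad i q = Am' a q * ad i := by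
  unfold Wm Am'
  split_ifs <;> first | rw [one_mul] | rfl | omega

lemma Am_comm_left {q : ℕ} {u : R} (h : q ≠ 0 → Commute (a q) u) : Commute (Am' a q) u := by
  unfold Am'
  split_ifs with hq
  · exact Commute.one_left _
  · exact h hq

section lemmasAm
include hcomm

lemma AmA_comm {p q : ℕ} (hp : p ≤ r) (hq : q ≤ r) : Commute (Am' a p) (Am' a q) := by
  apply Am_comm_left; intro h0
  apply (Am_comm_left ?_).symm
  intro h0'
  rcases eq_or_ne p q with heq | hne
  · rw [heq]
  · exact comm_aa hcomm (by omega) hq (by omega) hp hne.symm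

lemma Amad_comm {q m : ℕ} (hq : q ≤ r) (hm1 : 1 ≤ m) (hm2 : m ≤ r) (hne : q ≠ m) :
    Commute (Am' a q) (ad m) :=
  Am_comm_left fun h0 => comm_aad hcomm (by omega) hq hm1 hm2 hne

lemma Ama_comm {q m : ℕ} (hq : q ≤ r) (hm1 : 1 ≤ m) (hm2 : m ≤ r) :
    Commute (Am' a q) (a m) := by
  apply Am_comm_left; intro h0
  rcases eq_or_ne q m with heq | hne
  · rw [heq]
  · exact comm_aa hcomm (by omega) hq hm1 hm2 hne

lemma Amk_comm {q m : ℕ} (hq : q ≤ r) (hm1 : 1 ≤ m) (hm2 : m ≤ r) (hne : q ≠ m) :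
    Commute (Am' a q) (k m) :=
  Am_comm_left fun h0 => comm_ak hcomm (by omega) hq hm1 hm2 hne

lemma AmK_comm {q j : ℕ} (hq : q ≤ r) (hqj : q ≤ j) :
    Commute (Am' a q) (kprod k j r) :=
  Am_comm_left fun h0 => aK_comm hcomm (by omega) hq hqj

end lemmasAm

section lemmasKW
include hosc hcomm

lemma AmK_twist {q i : ℕ} (hq : i < q) (hq2 : q ≤ r) :
    Am' a q * kprod k i r = t • (kprod k i r * Am' a q) := by
  unfold Am'
  rw [if_neg (by omega)]
  exact aK_twist hosc hcomm hq hq2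

lemma KAm_twist (ht : t ≠ 0) {q i : ℕ} (hq : i < q) (hq2 : q ≤ r) :
    kprod k i r * Am' a q = t⁻¹ • (Am' a q * kprod k i r) := by
  rw [AmK_twist hosc hcomm hq hq2, smul_smul, inv_mul_cancel₀ ht, one_smul]

/-- `K_i` moves through `Wm j q` with a factor `t` when `q ≤ i < j`. -/
lemma KW_twist1 (ht : t ≠ 0) {i j q : ℕ} (hq : q ≤ i) (hij : i < j) (hjr : j ≤ r) :
    kprod k i r * Wm a ad j q = t • (Wm a ad j q * kprod k i r) := by
  rw [Wm_split (by omega) (by omega)]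
  calc kprod k i r * (Am' a q * ad j)
      = (kprod k i r * Am' a q) * ad j := by rw [mul_assoc]
    _ = (Am' a q * kprod k i r) * ad j := by
        rw [((AmK_comm hcomm (q := q) (by omega) (by omega)).symm).eq]
    _ = Am' a q * (kprod k i r * ad j) := by rw [mul_assoc]
    _ = Am' a q * (t • (ad j * kprod k i r)) := by
        rw [Kad_twist hosc hcomm ht hij hjr]
    _ = t • (Am' a q * ad j * kprod k i r) := by rw [mul_smul_comm, mul_assoc]

/-- `K_i` commutes with `Wm j q` when `i < q ≤ j`. -/
lemma KW_comm2 (ht : t ≠ 0) {i j q : ℕ} (hq : i < q) (hqj : q ≤ j) (hjr : j ≤ r) :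
    kprod k i r * Wm a ad j q = Wm a ad j q * kprod k i r := by
  rcases eq_or_ne q j with heq | hne
  · rw [heq, Wm_diag (by omega), one_mul, mul_one]
  · rw [Wm_split (by omega) hne]
    calc kprod k i r * (Am' a q * ad j)
        = (kprod k i r * Am' a q) * ad j := by rw [mul_assoc]
      _ = (t⁻¹ • (Am' a q * kprod k i r)) * ad j := by
          rw [KAm_twist hosc hcomm ht hq (by omega)]
      _ = t⁻¹ • (Am' a q * (kprod k i r * ad j)) := by rw [smul_mul_assoc, mul_assoc]
      _ = t⁻¹ • (Am' a q * (t • (ad j * kprod k i r))) := by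
          rw [Kad_twist hosc hcomm ht (by omega) hjr]
      _ = (t⁻¹ * t) • (Am' a q * (ad j * kprod k i r)) := by
          rw [mul_smul_comm, smul_smul]
      _ = Am' a q * ad j * kprod k i r := by
          rw [inv_mul_cancel₀ ht, one_smul, mul_assoc]

/-- Normal form: `M_{ip} M_{jq} = t • (W_{ip} (W_{jq} (K_i K_j)))` for `q ≤ i < j`. -/
lemma prodNF1 (ht : t ≠ 0) {i j p q : ℕ} (h1 : 1 ≤ i) (hij : i < j) (hjr : j ≤ r)
    (hp : p ≤ i) (hq : q ≤ i) :
    Ment r a ad k i p * Ment r a ad k j q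
      = t • (Wm a ad i p * (Wm a ad j q * (kprod k i r * kprod k j r))) := by
  rw [Ment_eq_W h1 hp, Ment_eq_W (by omega) (by omega)]
  calc Wm a ad i p * kprod k i r * (Wm a ad j q * kprod k j r)
      = Wm a ad i p * ((kprod k i r * Wm a ad j q) * kprod k j r) := by
        rw [mul_assoc, mul_assoc]
    _ = Wm a ad i p * ((t • (Wm a ad j q * kprod k i r)) * kprod k j r) := by
        rw [KW_twist1 hosc hcomm ht hq hij hjr]
    _ = t • (Wm a ad i p * (Wm a ad j q * (kprod k i r * kprod k j r))) := by
        rw [smul_mul_assoc, mul_smul_comm, mul_assoc]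

/-- Normal form without twist, for `i < q ≤ j`. -/
lemma prodNF1' (ht : t ≠ 0) {i j p q : ℕ} (h1 : 1 ≤ i) (hij : i < j) (hjr : j ≤ r)
    (hp : p ≤ i) (hq1 : i < q) (hq2 : q ≤ j) :
    Ment r a ad k i p * Ment r a ad k j q
      = Wm a ad i p * (Wm a ad j q * (kprod k i r * kprod k j r)) := by
  rw [Ment_eq_W h1 hp, Ment_eq_W (by omega) (by omega)]
  calc Wm a ad i p * kprod k i r * (Wm a ad j q * kprod k j r)
      = Wm a ad i p * ((kprod k i r * Wm a ad j q) * kprod k j r) := by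
        rw [mul_assoc, mul_assoc]
    _ = Wm a ad i p * ((Wm a ad j q * kprod k i r) * kprod k j r) := by
        rw [KW_comm2 hosc hcomm ht hq1 hq2 hjr]
    _ = Wm a ad i p * (Wm a ad j q * (kprod k i r * kprod k j r)) := by
        rw [mul_assoc]

/-- Normal form for the reversed product, `p ≤ i < j`, `q ≤ j`. -/
lemma prodNF2 {i j p q : ℕ} (h1 : 1 ≤ i) (hij : i < j) (hjr : j ≤ r)
    (hp : p ≤ i) (hq : q ≤ j) :
    Ment r a ad k j q * Ment r a ad k i p
      = Wm a ad j q * (Wm a ad i p * (kprod k i r * kprod k j r)) := by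
  rw [Ment_eq_W (by omega) hq, Ment_eq_W h1 hp]
  calc Wm a ad j q * kprod k j r * (Wm a ad i p * kprod k i r)
      = Wm a ad j q * ((kprod k j r * Wm a ad i p) * kprod k i r) := by
        rw [mul_assoc, mul_assoc]
    _ = Wm a ad j q * (Wm a ad i p * (kprod k j r * kprod k i r)) := by
        rw [((WK_comm hcomm h1 (by omega) hp (le_of_lt hij)).symm).eq, mul_assoc]
    _ = Wm a ad j q * (Wm a ad i p * (kprod k i r * kprod k j r)) := by
        rw [(KK_comm hcomm (i := j) (j := i)).eq]

end lemmasKW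

omit hcomm in
lemma Am'_pos {q : ℕ} (h : q ≠ 0) : Am' a q = a q := if_neg h

section Wid
include hosc hcomm

/-- Core identity for macro case VI (`i<j`, `l<k`), `W`-level. -/
lemma Wid5z (ht : t ≠ 0) {i j p q : ℕ} (h1 : 1 ≤ i) (hij : i < j) (hjr : j ≤ r)
    (hq : q < p) (hp : p ≤ i) (z : R) :
    (t-1) • (Wm a ad i p * (Wm a ad j q * z)) + Wm a ad j p * (Wm a ad i q * z)
      = t • (Wm a ad i q * (Wm a ad j p * z)) := by
  have hqr : q ≤ r := by omega
  have hpr : p ≤ r := by omega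
  have hQJ : Commute (Am' a q) (ad j) := Amad_comm hcomm hqr (by omega) hjr (by omega)
  have hQI : Commute (Am' a q) (ad i) := Amad_comm hcomm hqr h1 (by omega) (by omega)
  have hPJ : Commute (Am' a p) (ad j) := Amad_comm hcomm hpr (by omega) hjr (by omega)
  have hPQ : Commute (Am' a p) (Am' a q) := AmA_comm hcomm hpr hqr
  have hIJ : Commute (ad i) (ad j) := comm_adad hcomm h1 (by omega) (by omega) hjr (by omega)
  rw [Wm_split (show j ≠ 0 by omega) (show q ≠ j by omega),
      Wm_split (show i ≠ 0 by omega) (show q ≠ i by omega),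
      Wm_split (show j ≠ 0 by omega) (show p ≠ j by omega)]
  rcases eq_or_ne p i with heq | hne
  · -- collision case p = i
    rw [heq, Wm_diag (show i ≠ 0 by omega), Am'_pos (show i ≠ 0 by omega)]
    have osc1 : a i * ad i = 1 - k i := osc_aad hosc h1 (by omega)
    have osc2 : ad i * a i = 1 - t⁻¹ • k i := osc_ada hosc h1 (by omega)
    have hQA : Commute (Am' a q) (a i) := Ama_comm hcomm hqr h1 (by omega)
    have hKJ : Commute (k i) (ad j) :=
      (comm_adk hcomm (by omega) hjr h1 (by omega) (by omega)).symm
    have T2 : (a i * ad j) * ((Am' a q * ad i) * z)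
        = Am' a q * (ad j * z) - Am' a q * (ad j * (k i * z)) := by
      calc (a i * ad j) * ((Am' a q * ad i) * z)
          = a i * (ad j * (Am' a q * (ad i * z))) := by rw [mul_assoc, mul_assoc]
        _ = a i * (Am' a q * (ad j * (ad i * z))) := by rw [comm_swap hQJ.symm]
        _ = Am' a q * (a i * (ad i * (ad j * z))) := by
            rw [comm_swap hIJ.symm, comm_swap hQA.symm]
        _ = Am' a q * ((a i * ad i) * (ad j * z)) := by
            rw [← mul_assoc (a i) (ad i) (ad j * z)]
        _ = Am' a q * ((1 - k i) * (ad j * z)) := by rw [osc1]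
        _ = Am' a q * (ad j * z) - Am' a q * (k i * (ad j * z)) := by
            rw [sub_mul, one_mul, mul_sub]
        _ = Am' a q * (ad j * z) - Am' a q * (ad j * (k i * z)) := by rw [comm_swap hKJ]
    have T3 : (Am' a q * ad i) * ((a i * ad j) * z)
        = Am' a q * (ad j * z) - t⁻¹ • (Am' a q * (ad j * (k i * z))) := by
      calc (Am' a q * ad i) * ((a i * ad j) * z)
          = Am' a q * (ad i * (a i * (ad j * z))) := by rw [mul_assoc, mul_assoc]
        _ = Am' a q * ((ad i * a i) * (ad j * z)) := by
            rw [← mul_assoc (ad i) (a i) (ad j * z)]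
        _ = Am' a q * ((1 - t⁻¹ • k i) * (ad j * z)) := by rw [osc2]
        _ = Am' a q * (ad j * z) - t⁻¹ • (Am' a q * (k i * (ad j * z))) := by
            rw [sub_mul, one_mul, smul_mul_assoc, mul_sub, mul_smul_comm]
        _ = _ := by rw [comm_swap hKJ]
    rw [one_mul, mul_assoc (Am' a q) (ad j) z, T2, T3]
    match_scalars <;> field_simp <;> ring
  · -- generic case p < i
    rw [Wm_split (show i ≠ 0 by omega) hne]
    have hPI : Commute (Am' a p) (ad i) := Amad_comm hcomm hpr h1 (by omega) hne
    have T1 : (Am' a p * ad i) * ((Am' a q * ad j) * z)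
        = Am' a q * (Am' a p * (ad i * (ad j * z))) := by
      calc (Am' a p * ad i) * ((Am' a q * ad j) * z)
          = Am' a p * (ad i * (Am' a q * (ad j * z))) := by rw [mul_assoc, mul_assoc]
        _ = Am' a p * (Am' a q * (ad i * (ad j * z))) := by rw [comm_swap hQI.symm]
        _ = Am' a q * (Am' a p * (ad i * (ad j * z))) := by rw [comm_swap hPQ]
    have T2 : (Am' a p * ad j) * ((Am' a q * ad i) * z)
        = Am' a q * (Am' a p * (ad i * (ad j * z))) := by
      calc (Am' a p * ad j) * ((Am' a q * ad i) * z)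
          = Am' a p * (ad j * (Am' a q * (ad i * z))) := by rw [mul_assoc, mul_assoc]
        _ = Am' a p * (Am' a q * (ad j * (ad i * z))) := by rw [comm_swap hQJ.symm]
        _ = Am' a p * (Am' a q * (ad i * (ad j * z))) := by rw [comm_swap hIJ.symm]
        _ = Am' a q * (Am' a p * (ad i * (ad j * z))) := by rw [comm_swap hPQ]
    have T3 : (Am' a q * ad i) * ((Am' a p * ad j) * z)
        = Am' a q * (Am' a p * (ad i * (ad j * z))) := by
      calc (Am' a q * ad i) * ((Am' a p * ad j) * z)
          = Am' a q * (ad i * (Am' a p * (ad j * z))) := by rw [mul_assoc, mul_assoc]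
        _ = Am' a q * (Am' a p * (ad i * (ad j * z))) := by rw [comm_swap hPI.symm]
    rw [T1, T2, T3]
    module

/-- Core identity for macro case VII, `W`-level. -/
lemma Wid7z (ht : t ≠ 0) {i j p q : ℕ} (h1 : 1 ≤ i) (hij : i < j) (hjr : j ≤ r)
    (hpq : p < q) (hq : q ≤ i) (z : R) :
    t • (Wm a ad i p * (Wm a ad j q * z))
      = Wm a ad j q * (Wm a ad i p * z) + (t-1) • (Wm a ad j p * (Wm a ad i q * z)) := by
  have hqr : q ≤ r := by omega
  have hpr : p ≤ r := by omega
  have hPJ : Commute (Am' a p) (ad j) := Amad_comm hcomm hpr (by omega) hjr (by omega)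
  have hPI : Commute (Am' a p) (ad i) := Amad_comm hcomm hpr h1 (by omega) (by omega)
  have hQJ : Commute (Am' a q) (ad j) := Amad_comm hcomm hqr (by omega) hjr (by omega)
  have hQP : Commute (Am' a q) (Am' a p) := AmA_comm hcomm hqr hpr
  have hIJ : Commute (ad i) (ad j) := comm_adad hcomm h1 (by omega) (by omega) hjr (by omega)
  rw [Wm_split (show j ≠ 0 by omega) (show p ≠ j by omega),
      Wm_split (show i ≠ 0 by omega) (show p ≠ i by omega)]
  rcases eq_or_ne q i with heq | hne
  · rw [heq, Wm_diag (show i ≠ 0 by omega),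
      Wm_split (show j ≠ 0 by omega) (show i ≠ j by omega), Am'_pos (show i ≠ 0 by omega)]
    have osc1 : a i * ad i = 1 - k i := osc_aad hosc h1 (by omega)
    have osc2 : ad i * a i = 1 - t⁻¹ • k i := osc_ada hosc h1 (by omega)
    have hPA : Commute (Am' a p) (a i) := Ama_comm hcomm hpr h1 (by omega)
    have hKJ : Commute (k i) (ad j) :=
      (comm_adk hcomm (by omega) hjr h1 (by omega) (by omega)).symm
    have TL : (Am' a p * ad i) * ((a i * ad j) * z)
        = Am' a p * (ad j * z) - t⁻¹ • (Am' a p * (ad j * (k i * z))) := by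
      calc (Am' a p * ad i) * ((a i * ad j) * z)
          = Am' a p * (ad i * (a i * (ad j * z))) := by rw [mul_assoc, mul_assoc]
        _ = Am' a p * ((ad i * a i) * (ad j * z)) := by
            rw [← mul_assoc (ad i) (a i) (ad j * z)]
        _ = Am' a p * ((1 - t⁻¹ • k i) * (ad j * z)) := by rw [osc2]
        _ = Am' a p * (ad j * z) - t⁻¹ • (Am' a p * (k i * (ad j * z))) := by
            rw [sub_mul, one_mul, smul_mul_assoc, mul_sub, mul_smul_comm]
        _ = _ := by rw [comm_swap hKJ]
    have TR1 : (a i * ad j) * ((Am' a p * ad i) * z)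
        = Am' a p * (ad j * z) - Am' a p * (ad j * (k i * z)) := by
      calc (a i * ad j) * ((Am' a p * ad i) * z)
          = a i * (ad j * (Am' a p * (ad i * z))) := by rw [mul_assoc, mul_assoc]
        _ = a i * (Am' a p * (ad j * (ad i * z))) := by rw [comm_swap hPJ.symm]
        _ = Am' a p * (a i * (ad i * (ad j * z))) := by
            rw [comm_swap hIJ.symm, comm_swap hPA.symm]
        _ = Am' a p * ((a i * ad i) * (ad j * z)) := by
            rw [← mul_assoc (a i) (ad i) (ad j * z)]
        _ = Am' a p * ((1 - k i) * (ad j * z)) := by rw [osc1]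
        _ = Am' a p * (ad j * z) - Am' a p * (k i * (ad j * z)) := by
            rw [sub_mul, one_mul, mul_sub]
        _ = _ := by rw [comm_swap hKJ]
    rw [TL, TR1, one_mul, mul_assoc (Am' a p) (ad j) z]
    match_scalars <;> field_simp <;> ring
  · rw [Wm_split (show j ≠ 0 by omega) (show q ≠ j by omega),
      Wm_split (show i ≠ 0 by omega) hne]
    have hQI : Commute (Am' a q) (ad i) := Amad_comm hcomm hqr h1 (by omega) hne
    have T1 : (Am' a p * ad i) * ((Am' a q * ad j) * z)
        = Am' a p * (Am' a q * (ad i * (ad j * z))) := by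
      calc (Am' a p * ad i) * ((Am' a q * ad j) * z)
          = Am' a p * (ad i * (Am' a q * (ad j * z))) := by rw [mul_assoc, mul_assoc]
        _ = _ := by rw [comm_swap hQI.symm]
    have T2 : (Am' a q * ad j) * ((Am' a p * ad i) * z)
        = Am' a p * (Am' a q * (ad i * (ad j * z))) := by
      calc (Am' a q * ad j) * ((Am' a p * ad i) * z)
          = Am' a q * (ad j * (Am' a p * (ad i * z))) := by rw [mul_assoc, mul_assoc]
        _ = Am' a q * (Am' a p * (ad j * (ad i * z))) := by rw [comm_swap hPJ.symm]
        _ = Am' a q * (Am' a p * (ad i * (ad j * z))) := by rw [comm_swap hIJ.symm]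
        _ = _ := by rw [comm_swap hQP]
    have T3 : (Am' a p * ad j) * ((Am' a q * ad i) * z)
        = Am' a p * (Am' a q * (ad i * (ad j * z))) := by
      calc (Am' a p * ad j) * ((Am' a q * ad i) * z)
          = Am' a p * (ad j * (Am' a q * (ad i * z))) := by rw [mul_assoc, mul_assoc]
        _ = Am' a p * (Am' a q * (ad j * (ad i * z))) := by rw [comm_swap hQJ.symm]
        _ = _ := by rw [comm_swap hIJ.symm]
    rw [T1, T2, T3]
    module

/-- Core identity for macro case V with `i = 0`, `W`-level. -/
lemma Wid4z (ht : t ≠ 0) {j p q : ℕ} (h1 : 1 ≤ j) (hjr : j ≤ r) (hpq : p < q)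
    (hq : q ≤ j) (z : R) :
    t • (Wm a ad j p * (Am' a q * z))
      = (t-1) • (Am' a p * (Wm a ad j q * z)) + Am' a q * (Wm a ad j p * z) := by
  have hqr : q ≤ r := by omega
  have hpr : p ≤ r := by omega
  have hPJ : Commute (Am' a p) (ad j) := Amad_comm hcomm hpr h1 hjr (by omega)
  have hQP : Commute (Am' a q) (Am' a p) := AmA_comm hcomm hqr hpr
  rw [Wm_split (show j ≠ 0 by omega) (show p ≠ j by omega)]
  rcases eq_or_ne q j with heq | hne
  · rw [heq, Wm_diag (show j ≠ 0 by omega), Am'_pos (show j ≠ 0 by omega)]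
    have osc1 : a j * ad j = 1 - k j := osc_aad hosc h1 hjr
    have osc2 : ad j * a j = 1 - t⁻¹ • k j := osc_ada hosc h1 hjr
    have hPA : Commute (Am' a p) (a j) := Ama_comm hcomm hpr h1 hjr
    have TL : (Am' a p * ad j) * (a j * z)
        = Am' a p * z - t⁻¹ • (Am' a p * (k j * z)) := by
      calc (Am' a p * ad j) * (a j * z)
          = Am' a p * (ad j * (a j * z)) := by rw [mul_assoc]
        _ = Am' a p * ((ad j * a j) * z) := by rw [← mul_assoc (ad j) (a j) z]
        _ = Am' a p * ((1 - t⁻¹ • k j) * z) := by rw [osc2]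
        _ = Am' a p * z - t⁻¹ • (Am' a p * (k j * z)) := by
            rw [sub_mul, one_mul, smul_mul_assoc, mul_sub, mul_smul_comm]
    have TR2 : a j * ((Am' a p * ad j) * z)
        = Am' a p * z - Am' a p * (k j * z) := by
      calc a j * ((Am' a p * ad j) * z)
          = a j * (Am' a p * (ad j * z)) := by rw [mul_assoc]
        _ = Am' a p * (a j * (ad j * z)) := by rw [comm_swap hPA.symm]
        _ = Am' a p * ((a j * ad j) * z) := by rw [← mul_assoc (a j) (ad j) z]
        _ = Am' a p * ((1 - k j) * z) := by rw [osc1]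
        _ = Am' a p * z - Am' a p * (k j * z) := by rw [sub_mul, one_mul, mul_sub]
    rw [TL, TR2, one_mul]
    match_scalars <;> field_simp <;> ring
  · rw [Wm_split (show j ≠ 0 by omega) hne]
    have hQJ : Commute (Am' a q) (ad j) := Amad_comm hcomm hqr h1 hjr hne
    have T1 : (Am' a p * ad j) * (Am' a q * z)
        = Am' a p * (Am' a q * (ad j * z)) := by
      calc (Am' a p * ad j) * (Am' a q * z)
          = Am' a p * (ad j * (Am' a q * z)) := by rw [mul_assoc]
        _ = _ := by rw [comm_swap hQJ.symm]
    have T2 : Am' a p * ((Am' a q * ad j) * z)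
        = Am' a p * (Am' a q * (ad j * z)) := by rw [mul_assoc (Am' a q) (ad j) z]
    have T3 : Am' a q * ((Am' a p * ad j) * z)
        = Am' a p * (Am' a q * (ad j * z)) := by
      calc Am' a q * ((Am' a p * ad j) * z)
          = Am' a q * (Am' a p * (ad j * z)) := by rw [mul_assoc (Am' a p) (ad j) z]
        _ = _ := by rw [comm_swap hQP]
    rw [T1, T2, T3]
    module

/-- Core identity for macro case IX with `j = 0`, `W`-level. -/
lemma Wid10z (ht : t ≠ 0) {i p q : ℕ} (h1 : 1 ≤ i) (hir : i ≤ r) (hqp : q < p)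
    (hp : p ≤ i) (z : R) :
    (t-1) • (Wm a ad i p * (Am' a q * z)) + Am' a p * (Wm a ad i q * z)
      = t • (Wm a ad i q * (Am' a p * z)) := by
  have hqr : q ≤ r := by omega
  have hpr : p ≤ r := by omega
  have hQP : Commute (Am' a q) (Am' a p) := AmA_comm hcomm hqr hpr
  have hQI : Commute (Am' a q) (ad i) := Amad_comm hcomm hqr h1 hir (by omega)
  rw [Wm_split (show i ≠ 0 by omega) (show q ≠ i by omega)]
  rcases eq_or_ne p i with heq | hne
  · rw [heq, Wm_diag (show i ≠ 0 by omega), Am'_pos (show i ≠ 0 by omega)]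
    have osc1 : a i * ad i = 1 - k i := osc_aad hosc h1 hir
    have osc2 : ad i * a i = 1 - t⁻¹ • k i := osc_ada hosc h1 hir
    have hQA : Commute (Am' a q) (a i) := Ama_comm hcomm hqr h1 hir
    have T2 : a i * ((Am' a q * ad i) * z)
        = Am' a q * z - Am' a q * (k i * z) := by
      calc a i * ((Am' a q * ad i) * z)
          = a i * (Am' a q * (ad i * z)) := by rw [mul_assoc (Am' a q) (ad i) z]
        _ = Am' a q * (a i * (ad i * z)) := by rw [comm_swap hQA.symm]
        _ = Am' a q * ((a i * ad i) * z) := by rw [← mul_assoc (a i) (ad i) z]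
        _ = Am' a q * ((1 - k i) * z) := by rw [osc1]
        _ = Am' a q * z - Am' a q * (k i * z) := by rw [sub_mul, one_mul, mul_sub]
    have T3 : (Am' a q * ad i) * (a i * z)
        = Am' a q * z - t⁻¹ • (Am' a q * (k i * z)) := by
      calc (Am' a q * ad i) * (a i * z)
          = Am' a q * (ad i * (a i * z)) := by rw [mul_assoc]
        _ = Am' a q * ((ad i * a i) * z) := by rw [← mul_assoc (ad i) (a i) z]
        _ = Am' a q * ((1 - t⁻¹ • k i) * z) := by rw [osc2]
        _ = Am' a q * z - t⁻¹ • (Am' a q * (k i * z)) := by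
            rw [sub_mul, one_mul, smul_mul_assoc, mul_sub, mul_smul_comm]
    rw [T2, T3, one_mul]
    match_scalars <;> field_simp <;> ring
  · rw [Wm_split (show i ≠ 0 by omega) hne]
    have hPI : Commute (Am' a p) (ad i) := Amad_comm hcomm hpr h1 hir hne
    have T1 : (Am' a p * ad i) * (Am' a q * z)
        = Am' a q * (Am' a p * (ad i * z)) := by
      calc (Am' a p * ad i) * (Am' a q * z)
          = Am' a p * (ad i * (Am' a q * z)) := by rw [mul_assoc]
        _ = Am' a p * (Am' a q * (ad i * z)) := by rw [comm_swap hQI.symm]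
        _ = _ := by rw [comm_swap hQP.symm]
    have T2 : Am' a p * ((Am' a q * ad i) * z)
        = Am' a q * (Am' a p * (ad i * z)) := by
      calc Am' a p * ((Am' a q * ad i) * z)
          = Am' a p * (Am' a q * (ad i * z)) := by rw [mul_assoc (Am' a q) (ad i) z]
        _ = _ := by rw [comm_swap hQP.symm]
    have T3 : (Am' a q * ad i) * (Am' a p * z)
        = Am' a q * (Am' a p * (ad i * z)) := by
      calc (Am' a q * ad i) * (Am' a p * z)
          = Am' a q * (ad i * (Am' a p * z)) := by rw [mul_assoc]
        _ = _ := by rw [comm_swap hPI.symm]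
    rw [T1, T2, T3]
    module

end Wid

section Lent
include hcomm

lemma AmW_comm1 {j p c : ℕ} (h1 : 1 ≤ j) (hjr : j ≤ r) (hp : p ≤ j) (hc : c ≤ r)
    (hcj : c ≠ j) : Commute (Am' a c) (Wm a ad j p) := by
  rcases eq_or_ne p j with heq | hne
  · rw [heq, Wm_diag (by omega)]; exact Commute.one_right _
  · rw [Wm_split (by omega) hne]
    exact Commute.mul_right (AmA_comm hcomm hc (by omega)) (Amad_comm hcomm hc h1 hjr hcj)

/-- Entries in the same row commute (macro case I). -/
lemma Lrow_comm {i p q : ℕ} (hir : i ≤ r) (hp : p ≤ r) (hq : q ≤ r) :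
    Commute (Ment r a ad k i p) (Ment r a ad k i q) := by
  rcases Nat.eq_zero_or_pos i with rfl | h1
  · rw [Ment_row0', Ment_row0']
    exact AmA_comm hcomm hp hq
  rcases le_or_gt p i with hp' | hp'
  · rcases le_or_gt q i with hq' | hq'
    · rw [Ment_eq_W h1 hp', Ment_eq_W h1 hq']
      have c1 := WWrow_comm hcomm h1 hir hp' hq'
      have c2 := WK_comm hcomm h1 hir hp' (le_refl i)
      have c3 := WK_comm hcomm h1 hir hq' (le_refl i)
      exact Commute.mul_left (c1.mul_right c2) (c3.symm.mul_right (Commute.refl _))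
    · rw [Ment_zero_row h1 hq']; exact Commute.zero_right _
  · rw [Ment_zero_row h1 hp']; exact Commute.zero_left _

/-- A row-0 entry commutes with a row-`j` entry whose column is at least as large. -/
lemma Lrow0_comm {j p q : ℕ} (hjr : j ≤ r) (hq : q ≤ r) (hpq : p ≤ q) :
    Commute (Ment r a ad k 0 p) (Ment r a ad k j q) := by
  rw [Ment_row0']
  rcases Nat.eq_zero_or_pos j with rfl | h1
  · rw [Ment_row0']; exact AmA_comm hcomm (by omega) hq
  rcases le_or_gt q j with hq' | hq'
  · rw [Ment_eq_W h1 hq']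
    rcases eq_or_ne q j with heq | hne
    · subst heq
      rw [Wm_diag (by omega), one_mul]
      exact AmK_comm hcomm (by omega) hpq
    · exact Commute.mul_right (AmW_comm1 hcomm h1 hjr hq' (by omega) (by omega))
        (AmK_comm hcomm (by omega) (by omega))
  · rw [Ment_zero_row h1 hq']; exact Commute.zero_right _

end Lent

section Lmain
include hosc hcomm

/-- Macro case II/III: column exchange. -/
lemma L2e (ht : t ≠ 0) {i j p : ℕ} (h1 : 1 ≤ i) (hij : i < j) (hjr : j ≤ r) (hp : p ≤ r) :
    Ment r a ad k i p * Ment r a ad k j p = t • (Ment r a ad k j p * Ment r a ad k i p) := by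
  rcases le_or_gt p i with hp' | hp'
  · rw [prodNF1 hosc hcomm ht h1 hij hjr hp' hp', prodNF2 hosc hcomm h1 hij hjr hp' (by omega)]
    rcases eq_or_ne p i with heq | hne
    · rw [heq, Wm_diag (show i ≠ 0 by omega)]; simp only [one_mul]
    · rw [comm_swap (WW_comm hcomm h1 hij hjr hp' (by omega) hne)]
  · rw [Ment_zero_row h1 hp', zero_mul, mul_zero, smul_zero]

/-- Macro case V, `i ≥ 1`: anti-diagonal exchange for `p < q`. -/
lemma L3e (ht : t ≠ 0) {i j p q : ℕ} (h1 : 1 ≤ i) (hij : i < j) (hjr : j ≤ r)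
    (hpq : p < q) (hq : q ≤ r) :
    Ment r a ad k i q * Ment r a ad k j p = t • (Ment r a ad k j p * Ment r a ad k i q) := by
  rcases le_or_gt q i with hq' | hq'
  · rw [prodNF1 hosc hcomm ht h1 hij hjr hq' (by omega),
      prodNF2 hosc hcomm h1 hij hjr hq' (by omega),
      comm_swap (WW_comm hcomm h1 hij hjr hq' (by omega) (by omega))]
  · rw [Ment_zero_row h1 hq', zero_mul, mul_zero, smul_zero]

/-- Macro case IX, `j ≥ 1`: anti-diagonal exchange for `q < p`. -/
lemma L9e (ht : t ≠ 0) {i j p q : ℕ} (h1 : 1 ≤ i) (hij : i < j) (hjr : j ≤ r)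
    (hqp : q < p) (hp : p ≤ r) :
    Ment r a ad k i p * Ment r a ad k j q = t • (Ment r a ad k j q * Ment r a ad k i p) := by
  rcases le_or_gt p i with hp' | hp'
  · rw [prodNF1 hosc hcomm ht h1 hij hjr hp' (by omega),
      prodNF2 hosc hcomm h1 hij hjr hp' (by omega),
      comm_swap (WW_comm hcomm h1 hij hjr hp' (by omega) (by omega))]
  · rw [Ment_zero_row h1 hp', zero_mul, mul_zero, smul_zero]

/-- Macro case VI, `i ≥ 1`. -/
lemma L5e (ht : t ≠ 0) {i j p q : ℕ} (h1 : 1 ≤ i) (hij : i < j) (hjr : j ≤ r)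
    (hqp : q < p) (hp : p ≤ r) :
    (t-1) • (Ment r a ad k i p * Ment r a ad k j q)
      + t • (Ment r a ad k j p * Ment r a ad k i q)
      = t • (Ment r a ad k i q * Ment r a ad k j p) := by
  rcases le_or_gt p i with hp' | hp'
  · -- q < p ≤ i < j : the interesting region
    rw [prodNF1 hosc hcomm ht h1 hij hjr hp' (by omega),
      prodNF2 hosc hcomm h1 hij hjr (show q ≤ i by omega) (by omega),
      prodNF1 hosc hcomm ht h1 hij hjr (show q ≤ i by omega) hp']
    have hW := Wid5z hosc hcomm ht h1 hij hjr hqp hp' (kprod k i r * kprod k j r)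
    linear_combination (norm := module) t • hW
  · rw [Ment_zero_row h1 hp', zero_mul, smul_zero, zero_add]
    rcases le_or_gt p j with hpj | hpj
    · rcases le_or_gt q i with hq' | hq'
      · rw [prodNF2 hosc hcomm h1 hij hjr hq' hpj,
          prodNF1' hosc hcomm ht h1 hij hjr hq' hp' hpj,
          comm_swap ((WW_comm hcomm h1 hij hjr hq' hpj (by omega)).symm)]
      · rw [Ment_zero_row h1 hq', mul_zero, zero_mul, smul_zero]
    · rw [Ment_zero_row (by omega) hpj, zero_mul, mul_zero, smul_zero]

/-- Macro case VII, `j ≥ 1`. -/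
lemma L7e (ht : t ≠ 0) {i j p q : ℕ} (h1 : 1 ≤ i) (hij : i < j) (hjr : j ≤ r)
    (hpq : p < q) (hq : q ≤ r) :
    Ment r a ad k i p * Ment r a ad k j q
      = Ment r a ad k j q * Ment r a ad k i p
        + (t-1) • (Ment r a ad k j p * Ment r a ad k i q) := by
  rcases le_or_gt p i with hp' | hp'
  · rcases le_or_gt q i with hq' | hq'
    · -- p < q ≤ i < j
      rw [prodNF1 hosc hcomm ht h1 hij hjr hp' hq',
        prodNF2 hosc hcomm h1 hij hjr hp' (by omega),
        prodNF2 hosc hcomm h1 hij hjr hq' (by omega)]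
      exact Wid7z hosc hcomm ht h1 hij hjr hpq hq' (kprod k i r * kprod k j r)
    · rcases le_or_gt q j with hqj | hqj
      · rw [Ment_zero_row h1 hq', mul_zero, smul_zero, add_zero,
          prodNF1' hosc hcomm ht h1 hij hjr hp' hq' hqj,
          prodNF2 hosc hcomm h1 hij hjr hp' hqj,
          comm_swap (WW_comm hcomm h1 hij hjr hp' hqj (by omega))]
      · rw [Ment_zero_row (show 1 ≤ j by omega) hqj, Ment_zero_row h1 (show i < q by omega),
          mul_zero, zero_mul, mul_zero, smul_zero, add_zero]
  · rw [Ment_zero_row h1 hp', Ment_zero_row h1 (show i < q by omega), zero_mul, mul_zero,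
      mul_zero, smul_zero, add_zero]

/-- Macro case V, `i = 0`. -/
lemma L4e (ht : t ≠ 0) {j p q : ℕ} (h1 : 1 ≤ j) (hjr : j ≤ r) (hpq : p < q) (hq : q ≤ r) :
    t • (Ment r a ad k j p * Ment r a ad k 0 q)
      = (t-1) • (Ment r a ad k 0 p * Ment r a ad k j q)
        + Ment r a ad k 0 q * Ment r a ad k j p := by
  rw [Ment_row0', Ment_row0']
  rcases le_or_gt p j with hpj | hpj
  · rw [Ment_eq_W h1 hpj]
    rcases le_or_gt q j with hqj | hqj
    · rw [Ment_eq_W h1 hqj, mul_assoc,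
        ((AmK_comm hcomm (q := q) hq hqj).symm).eq]
      exact Wid4z hosc hcomm ht h1 hjr hpq hqj (kprod k j r)
    · rw [Ment_zero_row h1 hqj, mul_zero, smul_zero, zero_add, mul_assoc,
        KAm_twist hosc hcomm ht hqj hq, mul_smul_comm, smul_smul,
        mul_inv_cancel₀ ht, one_smul,
        comm_swap (AmW_comm1 hcomm h1 hjr hpj hq (show q ≠ j by omega))]
  · rw [Ment_zero_row h1 hpj, Ment_zero_row h1 (show j < q by omega), zero_mul, smul_zero,
      mul_zero, smul_zero, mul_zero, zero_add]

/-- Macro case IX, `j = 0`. -/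
lemma L10e (ht : t ≠ 0) {i p q : ℕ} (h1 : 1 ≤ i) (hir : i ≤ r) (hqp : q < p) (hp : p ≤ r) :
    (t-1) • (Ment r a ad k i p * Ment r a ad k 0 q)
      + Ment r a ad k 0 p * Ment r a ad k i q
      = t • (Ment r a ad k i q * Ment r a ad k 0 p) := by
  rw [Ment_row0', Ment_row0']
  rcases le_or_gt p i with hp' | hp'
  · rw [Ment_eq_W h1 hp', Ment_eq_W h1 (show q ≤ i by omega), mul_assoc,
      ((AmK_comm hcomm (q := q) (by omega) (by omega)).symm).eq,
      mul_assoc (Wm a ad i q) (kprod k i r) (Am' a p),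
      ((AmK_comm hcomm (q := p) hp hp').symm).eq]
    exact Wid10z hosc hcomm ht h1 hir hqp hp' (kprod k i r)
  · rw [Ment_zero_row h1 hp', zero_mul, smul_zero, zero_add]
    rcases le_or_gt q i with hq' | hq'
    · rw [Ment_eq_W h1 hq', mul_assoc, KAm_twist hosc hcomm ht hp' hp, mul_smul_comm,
        smul_smul, mul_inv_cancel₀ ht, one_smul,
        comm_swap (AmW_comm1 hcomm h1 hir hq' hp (show p ≠ i by omega))]
    · rw [Ment_zero_row h1 hq', mul_zero, zero_mul, smul_zero]

end Lmain
end WSec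

section Assembly
variable {F R : Type*} [Field F] [Ring R] [Algebra F R]

lemma Lmat_eq {r : ℕ} {a ad k : ℕ → R} {x : F} (i j : Fin (r+1)) :
    Lmat r a ad k x i j
      = (if (i : ℕ) = 0 then (1:F) else x) • Ment r a ad k i.val j.val := by
  unfold Lmat Ment
  split_ifs <;> simp

lemma sum_support_two {ι M : Type*} [Fintype ι] [DecidableEq ι] [AddCommMonoid M]
    (f : ι → M) (u v : ι) (h : ∀ p, p ≠ u → p ≠ v → f p = 0) :
    ∑ p, f p = if u = v then f u else f u + f v := by
  classical
  have hsub : ∑ p, f p = ∑ p ∈ ({u, v} : Finset ι), f p := by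
    refine (Finset.sum_subset (Finset.subset_univ _) ?_).symm
    intro z _ hz
    simp only [Finset.mem_insert, Finset.mem_singleton, not_or] at hz
    exact h z hz.1 hz.2
  rw [hsub]
  rcases eq_or_ne u v with rfl | huv
  · simp
  · rw [Finset.sum_pair huv, if_neg huv]

lemma Rmat_left_eq_zero {N : ℕ} {t x y : F} {i j : Fin N} {p : Fin N × Fin N}
    (h1 : p ≠ (i, j)) (h2 : p ≠ (j, i)) : Rmat N t x y (i, j) p = 0 := by
  simp [Rmat, h1, h2]

lemma Rmat_right_eq_zero {N : ℕ} {t x y : F} {kk ll : Fin N} {q : Fin N × Fin N}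
    (h1 : q ≠ (kk, ll)) (h2 : q ≠ (ll, kk)) : Rmat N t x y q (kk, ll) = 0 := by
  have h1' : ((kk, ll) : Fin N × Fin N) ≠ q := h1.symm
  have h2' : ((kk, ll) : Fin N × Fin N) ≠ (q.2, q.1) := by
    intro hc
    apply h2
    have e1 : kk = q.2 := congrArg Prod.fst hc
    have e2 : ll = q.1 := congrArg Prod.snd hc
    exact Prod.ext e2.symm e1.symm
  simp [Rmat, h1', h2']

end Assembly

section RmatVals
variable {F : Type*} [Field F] {N : ℕ} {t x y : F} {u v : Fin N}

lemma Rmat_diag_eq : Rmat N t x y (u,u) (u,u) = 1 := by simp [Rmat]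
lemma Rmat_lt_diag (h : u < v) : Rmat N t x y (u,v) (u,v) = x*(t-1)/(t*x-y) := by
  simp [Rmat, h, h.ne, lt_asymm h, Prod.ext_iff]
lemma Rmat_lt_off (h : u < v) : Rmat N t x y (u,v) (v,u) = t*(x-y)/(t*x-y) := by
  simp [Rmat, h, h.ne, h.ne', lt_asymm h, Prod.ext_iff]
lemma Rmat_gt_diag (h : v < u) : Rmat N t x y (u,v) (u,v) = y*(t-1)/(t*x-y) := by
  simp [Rmat, h, h.ne, h.ne', lt_asymm h, Prod.ext_iff]
lemma Rmat_gt_off (h : v < u) : Rmat N t x y (u,v) (v,u) = (x-y)/(t*x-y) := by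
  simp [Rmat, h, h.ne, h.ne', lt_asymm h, Prod.ext_iff]

end RmatVals

set_option maxHeartbeats 2000000 in
theorem Lmat_satisfies_YangBaxter_algebra
    {F R : Type*} [Field F] [Ring R] [Algebra F R]
    (r : ℕ) (t : F) (ht : t ≠ 0) (a ad k : ℕ → R)
    (hosc : ∀ i, 1 ≤ i → i ≤ r → IsOscTriple t (a i) (ad i) (k i))
    (hcomm : ∀ i j, 1 ≤ i → i ≤ r → 1 ≤ j → j ≤ r → i ≠ j →
      ∀ u ∈ [a i, ad i, k i], ∀ v ∈ [a j, ad j, k j], Commute u v) :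
    ∀ x y : F, t * x ≠ y → ∀ i j kk ll : Fin (r + 1),
      ∑ p : Fin (r + 1) × Fin (r + 1),
          Rmat (r + 1) t x y (i, j) p • (Lmat r a ad k x p.1 kk * Lmat r a ad k y p.2 ll)
      = ∑ q : Fin (r + 1) × Fin (r + 1),
          Rmat (r + 1) t x y q (kk, ll) • (Lmat r a ad k y i q.1 * Lmat r a ad k x j q.2) := by
  intro x y hxy i j kk ll
  have hd : t * x - y ≠ 0 := sub_ne_zero.mpr hxy
  have hd' : x * t - y ≠ 0 := by rw [mul_comm]; exact hd
  have hir : (i : ℕ) ≤ r := Nat.lt_succ_iff.mp i.isLt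
  have hjr : (j : ℕ) ≤ r := Nat.lt_succ_iff.mp j.isLt
  have hkr : (kk : ℕ) ≤ r := Nat.lt_succ_iff.mp kk.isLt
  have hlr : (ll : ℕ) ≤ r := Nat.lt_succ_iff.mp ll.isLt
  rw [sum_support_two _ (i, j) (j, i)
      (fun p h1 h2 => by rw [Rmat_left_eq_zero h1 h2, zero_smul]),
    sum_support_two _ ((kk, ll)) ((ll, kk))
      (fun q h1 h2 => by rw [Rmat_right_eq_zero h1 h2, zero_smul])]
  dsimp only
  rcases lt_trichotomy i j with hij | hij | hij
  · -- i < j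
    have hij' : (i : ℕ) < (j : ℕ) := hij
    have hne1 : ((i, j) : Fin (r+1) × Fin (r+1)) ≠ (j, i) :=
      fun hc => hij.ne (congrArg Prod.fst hc)
    have hj0 : ¬ ((j : ℕ) = 0) := by omega
    rw [if_neg hne1, Rmat_lt_diag hij, Rmat_lt_off hij]
    rcases lt_trichotomy kk ll with hkl | hkl | hkl
    · -- kk < ll : macro V
      have hkl' : (kk : ℕ) < (ll : ℕ) := hkl
      have hne2 : ((kk, ll) : Fin (r+1) × Fin (r+1)) ≠ (ll, kk) :=
        fun hc => hkl.ne (congrArg Prod.fst hc)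
      rw [if_neg hne2, Rmat_lt_diag hkl, Rmat_gt_off hkl]
      simp only [Lmat_eq, smul_mul_assoc, mul_smul_comm, smul_smul]
      rcases Nat.eq_zero_or_pos (i : ℕ) with hi0 | hi0
      · simp only [hi0, if_pos rfl, if_true, if_neg hj0]
        linear_combination (norm := match_scalars <;> field_simp [hd] <;> (first | ring1 | (left; ring1) | (right; ring1) | tauto))
          ((x - y)/(t*x - y) * x) •
            (L4e hosc hcomm ht (show 1 ≤ (j:ℕ) by omega) hjr hkl' hlr)
      · have hi0' : ¬ ((i : ℕ) = 0) := by omega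
        simp only [if_neg hi0', if_neg hj0]
        rw [L3e hosc hcomm ht hi0 hij' hjr hkl' hlr]
        match_scalars <;> field_simp [hd] <;> (first | ring1 | (left; ring1) | (right; ring1) | tauto)
    · -- kk = ll : macro II
      subst hkl
      rw [if_pos rfl, Rmat_diag_eq]
      simp only [Lmat_eq, smul_mul_assoc, mul_smul_comm, smul_smul]
      rcases Nat.eq_zero_or_pos (i : ℕ) with hi0 | hi0
      · simp only [hi0, if_pos rfl, if_true, if_neg hj0]
        rw [← (Lrow0_comm hcomm hjr hkr (le_refl _)).eq]
        match_scalars <;> field_simp [hd] <;> (first | ring1 | (left; ring1) | (right; ring1) | tauto)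
      · have hi0' : ¬ ((i : ℕ) = 0) := by omega
        simp only [if_neg hi0', if_neg hj0]
        rw [L2e hosc hcomm ht hi0 hij' hjr hkr]
        match_scalars <;> field_simp [hd] <;> (first | ring1 | (left; ring1) | (right; ring1) | tauto)
    · -- ll < kk : macro VI
      have hkl' : (ll : ℕ) < (kk : ℕ) := hkl
      have hne2 : ((kk, ll) : Fin (r+1) × Fin (r+1)) ≠ (ll, kk) :=
        fun hc => hkl.ne' (congrArg Prod.fst hc)
      rw [if_neg hne2, Rmat_gt_diag hkl, Rmat_lt_off hkl]
      simp only [Lmat_eq, smul_mul_assoc, mul_smul_comm, smul_smul]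
      rcases Nat.eq_zero_or_pos (i : ℕ) with hi0 | hi0
      · simp only [hi0, if_pos rfl, if_true, if_neg hj0]
        rw [(Lrow0_comm hcomm hjr hkr (le_of_lt hkl')).eq]
        match_scalars <;> field_simp [hd] <;> (first | ring1 | (left; ring1) | (right; ring1) | tauto)
      · have hi0' : ¬ ((i : ℕ) = 0) := by omega
        simp only [if_neg hi0', if_neg hj0]
        linear_combination (norm := match_scalars <;> field_simp [hd] <;> (first | ring1 | (left; ring1) | (right; ring1) | tauto))
          ((x - y)/(t*x - y) * (x*y)) •
            (L5e hosc hcomm ht hi0 hij' hjr hkl' hkr)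
  · -- i = j : macro I
    subst hij
    rw [if_pos rfl, Rmat_diag_eq]
    rcases lt_trichotomy kk ll with hkl | hkl | hkl
    · have hkl' : (kk : ℕ) < (ll : ℕ) := hkl
      have hne2 : ((kk, ll) : Fin (r+1) × Fin (r+1)) ≠ (ll, kk) :=
        fun hc => hkl.ne (congrArg Prod.fst hc)
      rw [if_neg hne2, Rmat_lt_diag hkl, Rmat_gt_off hkl]
      simp only [Lmat_eq, smul_mul_assoc, mul_smul_comm, smul_smul]
      rw [← (Lrow_comm hcomm hir hkr hlr).eq]
      match_scalars <;> split_ifs <;> field_simp [hd] <;> (first | ring1 | (left; ring1) | (right; ring1) | tauto)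
    · subst hkl
      rw [if_pos rfl, Rmat_diag_eq]
      simp only [Lmat_eq, smul_mul_assoc, mul_smul_comm, smul_smul]
      match_scalars <;> split_ifs <;> ring
    · have hkl' : (ll : ℕ) < (kk : ℕ) := hkl
      have hne2 : ((kk, ll) : Fin (r+1) × Fin (r+1)) ≠ (ll, kk) :=
        fun hc => hkl.ne' (congrArg Prod.fst hc)
      rw [if_neg hne2, Rmat_gt_diag hkl, Rmat_lt_off hkl]
      simp only [Lmat_eq, smul_mul_assoc, mul_smul_comm, smul_smul]
      rw [← (Lrow_comm hcomm hir hkr hlr).eq]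
      match_scalars <;> split_ifs <;> field_simp [hd] <;> (first | ring1 | (left; ring1) | (right; ring1) | tauto)
  · -- j < i
    have hij' : (j : ℕ) < (i : ℕ) := hij
    have hne1 : ((i, j) : Fin (r+1) × Fin (r+1)) ≠ (j, i) :=
      fun hc => hij.ne' (congrArg Prod.fst hc)
    have hi0x : ¬ ((i : ℕ) = 0) := by omega
    rw [if_neg hne1, Rmat_gt_diag hij, Rmat_gt_off hij]
    rcases lt_trichotomy kk ll with hkl | hkl | hkl
    · -- kk < ll : macro VII
      have hkl' : (kk : ℕ) < (ll : ℕ) := hkl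
      have hne2 : ((kk, ll) : Fin (r+1) × Fin (r+1)) ≠ (ll, kk) :=
        fun hc => hkl.ne (congrArg Prod.fst hc)
      rw [if_neg hne2, Rmat_lt_diag hkl, Rmat_gt_off hkl]
      simp only [Lmat_eq, smul_mul_assoc, mul_smul_comm, smul_smul]
      rcases Nat.eq_zero_or_pos (j : ℕ) with hj0 | hj0
      · simp only [hj0, if_pos rfl, if_true, if_neg hi0x]
        rw [(Lrow0_comm hcomm hir hlr (le_of_lt hkl')).eq]
        match_scalars <;> field_simp [hd] <;> (first | ring1 | (left; ring1) | (right; ring1) | tauto)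
      · have hj0' : ¬ ((j : ℕ) = 0) := by omega
        simp only [if_neg hj0', if_neg hi0x]
        rw [L7e hosc hcomm ht hj0 hij' hir hkl' hlr]
        match_scalars <;> field_simp [hd] <;> (first | ring1 | (left; ring1) | (right; ring1) | tauto)
    · -- kk = ll : macro III
      subst hkl
      rw [if_pos rfl, Rmat_diag_eq]
      simp only [Lmat_eq, smul_mul_assoc, mul_smul_comm, smul_smul]
      rcases Nat.eq_zero_or_pos (j : ℕ) with hj0 | hj0
      · simp only [hj0, if_pos rfl, if_true, if_neg hi0x]
        rw [(Lrow0_comm hcomm hir hkr (le_refl _)).eq]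
        match_scalars <;> field_simp [hd] <;> (first | ring1 | (left; ring1) | (right; ring1) | tauto)
      · have hj0' : ¬ ((j : ℕ) = 0) := by omega
        simp only [if_neg hj0', if_neg hi0x]
        rw [L2e hosc hcomm ht hj0 hij' hir hkr]
        match_scalars <;> field_simp [hd] <;> (first | ring1 | (left; ring1) | (right; ring1) | tauto)
    · -- ll < kk : macro IX
      have hkl' : (ll : ℕ) < (kk : ℕ) := hkl
      have hne2 : ((kk, ll) : Fin (r+1) × Fin (r+1)) ≠ (ll, kk) :=
        fun hc => hkl.ne' (congrArg Prod.fst hc)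
      rw [if_neg hne2, Rmat_gt_diag hkl, Rmat_lt_off hkl]
      simp only [Lmat_eq, smul_mul_assoc, mul_smul_comm, smul_smul]
      rcases Nat.eq_zero_or_pos (j : ℕ) with hj0 | hj0
      · simp only [hj0, if_pos rfl, if_true, if_neg hi0x]
        linear_combination (norm := match_scalars <;> field_simp [hd] <;> (first | ring1 | (left; ring1) | (right; ring1) | tauto))
          ((x - y)/(t*x - y) * y) •
            (L10e hosc hcomm ht (show 1 ≤ (i:ℕ) by omega) hir hkl' hkr)
      · have hj0' : ¬ ((j : ℕ) = 0) := by omega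
        simp only [if_neg hj0', if_neg hi0x]
        rw [L9e hosc hcomm ht hj0 hij' hir hkl' hkr]
        match_scalars <;> field_simp [hd] <;> (first | ring1 | (left; ring1) | (right; ring1) | tauto)
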